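/- Let a > 0 and let b : ℝ → ℝ be differentiable with b'(s)/s → 0 as s → ∞. Define f(s) = exp(a s² + b(s)). Then for any fixed s₁, (s · ∫_{s₁}^{s} f(z) dz) / f(s) → 1/(2a) as s → ∞. -/

import Mathlib

open Filter Real MeasureTheory intervalIntegral

lemma my_fderiv (a : ℝ) (b : ℝ → ℝ) (hb : Differentiable ℝ b) (s : ℝ) :
    HasDerivAt (fun s => Real.exp (a*s^2 + b s))
      (Real.exp (a*s^2 + b s) * (2*a*s + deriv b s)) s := by
  have h1 : HasDerivAt (fun x : ℝ => a*x^2 + b x) (2*a*s + deriv b s) s := by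
    have h2 : HasDerivAt (fun x : ℝ => a*x^2) (2*a*s) s := by
      have := (hasDerivAt_pow 2 s).const_mul a
      convert this using 1
      · rfl
      · rfl
      ring
    exact h2.add (hb s).hasDerivAt
  exact h1.exp

lemma my_bbound (b : ℝ → ℝ)
    (hb' : Tendsto (fun s => deriv b s / s) atTop (nhds 0)) {η : ℝ} (hη : 0 < η) :
    ∀ᶠ z in atTop, |deriv b z| ≤ η * z := by
  filter_upwards [Metric.tendsto_nhds.mp hb' η hη, eventually_ge_atTop 1] with z h1 h2
  rw [Real.dist_eq, sub_zero] at h1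
  have hz : (0:ℝ) < z := lt_of_lt_of_le one_pos h2
  have : |deriv b z / z| * z ≤ η * z := mul_le_mul_of_nonneg_right h1.le hz.le
  rwa [abs_div, abs_of_pos hz, div_mul_cancel₀ _ hz.ne'] at this

lemma my_bftc (b : ℝ → ℝ) (hb : Differentiable ℝ b) {η t₀ s : ℝ} (ht : 0 < t₀) (hs : t₀ ≤ s)
    (hbd : ∀ z, t₀ ≤ z → |deriv b z| ≤ η * z) :
    b t₀ - η*(s^2 - t₀^2)/2 ≤ b s := by
  have hInt : IntervalIntegrable (deriv b) volume t₀ s := by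
    apply IntervalIntegrable.mono_fun' (g := fun z => η * z)
    · exact (continuous_const.mul continuous_id).intervalIntegrable _ _
    · exact (measurable_deriv b).aestronglyMeasurable.restrict
    · rw [Set.uIoc_of_le hs]
      filter_upwards [ae_restrict_mem measurableSet_Ioc] with z hz
      rw [Real.norm_eq_abs]
      exact hbd z hz.1.le
  have hftc : ∫ z in t₀..s, deriv b z = b s - b t₀ :=
    integral_eq_sub_of_hasDerivAt (fun x _ => (hb x).hasDerivAt) hInt
  have hmono : ∫ z in t₀..s, (-(η * z)) ≤ ∫ z in t₀..s, deriv b z := by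
    apply integral_mono_on hs _ hInt
    · intro z hz
      have := hbd z hz.1
      exact neg_le_of_abs_le this |>.trans_eq' rfl
    · exact ((continuous_const.mul continuous_id).neg).intervalIntegrable _ _
  have hval : ∫ z in t₀..s, (-(η * z)) = -(η * (s^2 - t₀^2)/2) := by
    rw [intervalIntegral.integral_neg, intervalIntegral.integral_const_mul,
      integral_id]
    ring
  rw [hval, hftc] at hmono
  linarith

lemma my_rlim (a : ℝ) (ha : 0 < a) (b : ℝ → ℝ) (hb : Differentiable ℝ b)
    (hb' : Tendsto (fun s => deriv b s / s) atTop (nhds 0)) :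
    Tendsto (fun s => s / Real.exp (a*s^2 + b s)) atTop (nhds 0) := by
  obtain ⟨t₀', hbd'⟩ := eventually_atTop.mp (my_bbound b hb' ha)
  set t : ℝ := max t₀' 1 with hT
  have ht1 : (1:ℝ) ≤ t := le_max_right _ _
  have ht0 : (0:ℝ) < t := lt_of_lt_of_le one_pos ht1
  have hbd : ∀ z, t ≤ z → |deriv b z| ≤ a * z := fun z hz => hbd' z ((le_max_left _ _).trans hz)
  set c : ℝ := b t + (a/2)*t^2 with hc
  have key : ∀ s, t ≤ s → (a/2)*s^2 + c ≤ a*s^2 + b s := by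
    intro s hs
    have := my_bftc b hb ht0 hs hbd
    nlinarith
  have hg : Tendsto (fun s : ℝ => Real.exp (-c) * (s * Real.exp (-s))) atTop (nhds 0) := by
    have h0 : Tendsto (fun s : ℝ => s * Real.exp (-s)) atTop (nhds 0) := by
      simpa using Real.tendsto_pow_mul_exp_neg_atTop_nhds_zero 1
    simpa using h0.const_mul (Real.exp (-c))
  apply squeeze_zero' _ _ hg
  · filter_upwards [eventually_gt_atTop 0] with s hs
    positivity
  · filter_upwards [eventually_ge_atTop t, eventually_ge_atTop (2/a)] with s hst hsa
    have hs0 : 0 < s := lt_of_lt_of_le ht0 hst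
    have h1 : s ≤ (a/2)*s^2 := by
      have : 2/a ≤ s := hsa
      rw [div_le_iff₀ ha] at this
      nlinarith
    have h2 : s + c ≤ a*s^2 + b s := le_trans (by linarith) (key s hst)
    rw [div_eq_mul_inv, ← Real.exp_neg]
    calc s * Real.exp (-(a*s^2 + b s)) ≤ s * Real.exp (-(s+c)) := by
          apply mul_le_mul_of_nonneg_left (Real.exp_le_exp.mpr (by linarith)) hs0.le
      _ = Real.exp (-c) * (s * Real.exp (-s)) := by
          rw [neg_add, Real.exp_add]; ring

set_option maxHeartbeats 2000000 in
theorem stmt_2 (a : ℝ) (ha : 0 < a) (b : ℝ → ℝ) (hb : Differentiable ℝ b)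
    (hb' : Tendsto (fun s => deriv b s / s) atTop (nhds 0))
    (f : ℝ → ℝ) (hf : ∀ s, f s = Real.exp (a * s ^ 2 + b s)) (s₁ : ℝ) :
    Tendsto (fun s => (s * ∫ z in s₁..s, f z) / f s) atTop (nhds (1 / (2 * a))) := by
  have hfe : f = fun s => Real.exp (a * s ^ 2 + b s) := funext hf
  subst hfe
  set F : ℝ → ℝ := fun s => Real.exp (a * s ^ 2 + b s) with hFdef
  have hFc : Continuous F := Real.continuous_exp.comp
    ((continuous_const.mul (continuous_pow 2)).add hb.continuous)
  have hFpos : ∀ s, 0 < F s := fun s => Real.exp_pos _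
  rw [Metric.tendsto_nhds]
  intro ε hε
  set η : ℝ := min (a/2) (ε*a^2/4) with hηdef
  have hη : 0 < η := lt_min (by linarith) (by positivity)
  have hη1 : η ≤ a/2 := min_le_left _ _
  have hη2 : η ≤ ε*a^2/4 := min_le_right _ _
  have hd : 0 < 2*a - 2*η := by linarith
  have he : 0 < 2*a + η := by linarith
  -- eventual conditions
  have hev : ∀ᶠ z in atTop, |deriv b z| ≤ η*z ∧ s₁ ≤ z ∧ 1 ≤ z ∧ 1 ≤ η*z^2 := by
    filter_upwards [my_bbound b hb' hη, eventually_ge_atTop s₁, eventually_ge_atTop 1,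
      eventually_ge_atTop (1/η)] with z h1 h2 h3 h4
    refine ⟨h1, h2, h3, ?_⟩
    have : 1 ≤ η * z := by rw [div_le_iff₀ hη] at h4; linarith [mul_comm η z]
    nlinarith
  obtain ⟨s₀', hs₀'⟩ := eventually_atTop.mp hev
  set s₀ : ℝ := max s₀' (max s₁ 1) with hs₀def
  have hs₀p : ∀ z, s₀ ≤ z → |deriv b z| ≤ η*z ∧ s₁ ≤ z ∧ 1 ≤ z ∧ 1 ≤ η*z^2 :=
    fun z hz => hs₀' z ((le_max_left _ _).trans hz)
  have hs₀1 : 1 ≤ s₀ := le_trans (le_max_right _ _) (le_max_right _ _)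
  have hs₀0 : 0 < s₀ := lt_of_lt_of_le one_pos hs₀1
  have hs₀s₁ : s₁ ≤ s₀ := le_trans (le_max_left _ _) (le_max_right _ _)
  set C : ℝ := ∫ z in s₁..s₀, F z with hCdef
  have hC0 : 0 ≤ C := intervalIntegral.integral_nonneg hs₀s₁ (fun x _ => (hFpos x).le)
  set h₀ : ℝ := F s₀ / s₀ with hh₀def
  have hh₀ : 0 < h₀ := div_pos (hFpos s₀) hs₀0
  set ρ : ℝ := min (ε/(4*(C+1))) (ε*a/(4*(h₀+1))) with hρdef
  have hρ : 0 < ρ := lt_min (by positivity) (by positivity)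
  have hρ1 : ρ ≤ ε/(4*(C+1)) := min_le_left _ _
  have hρ2 : ρ ≤ ε*a/(4*(h₀+1)) := min_le_right _ _
  -- key FTC bound
  have key : ∀ s, s₀ ≤ s → (2*a-2*η)*(∫ z in s₀..s, F z) ≤ F s/s - h₀ ∧
      F s/s - h₀ ≤ (2*a+η)*(∫ z in s₀..s, F z) := by
    intro s hs
    set v : ℝ → ℝ := fun z => (F z*(2*a*z + deriv b z)*z - F z*1)/z^2 with hvdef
    have hvb : ∀ z ∈ Set.Icc s₀ s, (2*a-2*η)*F z ≤ v z ∧ v z ≤ (2*a+η)*F z := by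
      intro z hz
      obtain ⟨hb1, _, hz1, hz2⟩ := hs₀p z hz.1
      have hz0 : 0 < z := lt_of_lt_of_le one_pos hz1
      have hFz := hFpos z
      have hbl : -(η*z) ≤ deriv b z := neg_le_of_abs_le hb1
      have hbu : deriv b z ≤ η*z := le_of_abs_le hb1
      have hint1 := mul_le_mul_of_nonneg_left (mul_le_mul_of_nonneg_right hbl hz0.le) hFz.le
      have hint2 := mul_le_mul_of_nonneg_left (mul_le_mul_of_nonneg_right hbu hz0.le) hFz.le
      have hint3 := mul_le_mul_of_nonneg_left hz2 hFz.le
      constructor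
      · rw [le_div_iff₀ (by positivity : (0:ℝ) < z^2)]
        nlinarith [hint1, hint3]
      · rw [div_le_iff₀ (by positivity : (0:ℝ) < z^2)]
        nlinarith [hint2, hFz]
    have hvd : ∀ z ∈ Set.uIcc s₀ s, HasDerivAt (fun y => F y / y) (v z) z := by
      intro z hz
      rw [Set.uIcc_of_le hs] at hz
      have hz0 : (0:ℝ) < z := lt_of_lt_of_le hs₀0 hz.1
      exact (my_fderiv a b hb z).div (hasDerivAt_id z) hz0.ne'
    have hFi : IntervalIntegrable F volume s₀ s := hFc.intervalIntegrable _ _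
    have hgi : IntervalIntegrable (fun z => (2*a+η)*F z) volume s₀ s :=
      (continuous_const.mul hFc).intervalIntegrable _ _
    have hgi2 : IntervalIntegrable (fun z => (2*a-2*η)*F z) volume s₀ s :=
      (continuous_const.mul hFc).intervalIntegrable _ _
    have hvm : Measurable v := by
      apply Measurable.div
      · exact ((hFc.measurable.mul (((measurable_const.mul measurable_id).add
          (measurable_deriv b)))).mul measurable_id).sub (hFc.measurable.mul measurable_const)
      · exact measurable_id.pow_const 2
    have hvi : IntervalIntegrable v volume s₀ s := by
      apply IntervalIntegrable.mono_fun' hgi hvm.aestronglyMeasurable.restrict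
      rw [Set.uIoc_of_le hs]
      filter_upwards [ae_restrict_mem measurableSet_Ioc] with z hz
      obtain ⟨hl, hu⟩ := hvb z ⟨hz.1.le, hz.2⟩
      rw [Real.norm_eq_abs, abs_le]
      constructor
      · nlinarith [hFpos z]
      · exact hu
    have hftc : ∫ z in s₀..s, v z = F s/s - h₀ :=
      integral_eq_sub_of_hasDerivAt hvd hvi
    constructor
    · rw [← hftc]
      have h1 : ∫ z in s₀..s, (2*a-2*η)*F z ≤ ∫ z in s₀..s, v z :=
        integral_mono_on hs hgi2 hvi (fun z hz => (hvb z hz).1)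
      rwa [intervalIntegral.integral_const_mul] at h1
    · rw [← hftc]
      have h1 : ∫ z in s₀..s, v z ≤ ∫ z in s₀..s, (2*a+η)*F z :=
        integral_mono_on hs hvi hgi (fun z hz => (hvb z hz).2)
      rwa [intervalIntegral.integral_const_mul] at h1
  -- r eventually small
  have hr := my_rlim a ha b hb hb'
  have hrev : ∀ᶠ s in atTop, s / F s < ρ := hr.eventually_lt_const hρ
  filter_upwards [eventually_ge_atTop s₀, hrev] with s hs hrs
  obtain ⟨k1, k2⟩ := key s hs
  have hs0 : 0 < s := lt_of_lt_of_le hs₀0 hs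
  have hFs : 0 < F s := hFpos s
  set r : ℝ := s / F s with hrdef
  have hr0 : 0 < r := div_pos hs0 hFs
  set Ft : ℝ := ∫ z in s₀..s, F z with hFtdef
  have hFt0 : 0 ≤ Ft := intervalIntegral.integral_nonneg hs (fun x _ => (hFpos x).le)
  have hsplit : (∫ z in s₁..s, F z) = C + Ft :=
    (integral_add_adjacent_intervals (hFc.intervalIntegrable _ _)
      (hFc.intervalIntegrable _ _)).symm
  have hT : (s * ∫ z in s₁..s, F z) / F s = r*C + r*Ft := by
    rw [hsplit]; simp only [mul_add, add_div, mul_div_right_comm]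
    rfl
  clear_value F η s₀ C h₀ ρ r Ft
  rw [Real.dist_eq, hT, abs_sub_lt_iff]
  have h6 : r * (F s / s) = 1 := by
    rw [hrdef]; field_simp
  -- upper bound pieces
  have hstep1 : r * Ft ≤ 1/(2*a-2*η) := by
    rw [le_div_iff₀ hd]
    have h5 := mul_le_mul_of_nonneg_left k1 hr0.le
    nlinarith only [h5, h6, mul_pos hr0 hh₀]
  have hB : (1/(2*a))*(2*a) = 1 := by field_simp
  have hBpos : (0:ℝ) < 1/(2*a) := by positivity
  have hstep2 : 1/(2*a-2*η) ≤ 1/(2*a) + ε/4 := by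
    have hid : 1/(2*a-2*η) = 1/(2*a) + 2*η/((2*a-2*η)*(2*a)) := by
      field_simp
      rw [one_add_div (ne_of_gt (by linarith)), sub_add_cancel]
    rw [hid]
    have hq : 2*η/((2*a-2*η)*(2*a)) ≤ ε/4 := by
      rw [div_le_iff₀ (by positivity)]
      nlinarith only [mul_le_mul_of_nonneg_left hη1 (mul_pos hε ha).le, hη2, hη, ha, hε]
    linarith only [hq]
  have hrc : r*C ≤ ε/4 := by
    have : r*C ≤ (ε/(4*(C+1)))*C :=
      mul_le_mul (hrs.le.trans hρ1) le_rfl hC0 (by positivity)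
    have h7 : (ε/(4*(C+1)))*(4*(C+1)) = ε := by field_simp
    have hq : (0:ℝ) ≤ ε/(4*(C+1)) := by positivity
    nlinarith only [this, h7, hq, hε]
  -- lower bound pieces
  have hstep3 : (1 - r*h₀)/(2*a+η) ≤ r*Ft := by
    rw [div_le_iff₀ he]
    have h5 := mul_le_mul_of_nonneg_left k2 hr0.le
    nlinarith only [h5, h6]
  have hrh : r*h₀ ≤ ε*a/4 := by
    have h8 : r*h₀ ≤ (ε*a/(4*(h₀+1)))*h₀ :=
      mul_le_mul (hrs.le.trans hρ2) le_rfl hh₀.le (by positivity)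
    have h9 : (ε*a/(4*(h₀+1)))*h₀ ≤ ε*a/4 := by
      rw [div_mul_eq_mul_div, div_le_div_iff₀ (by positivity) (by positivity)]
      nlinarith only [mul_pos hε ha, hh₀]
    linarith only [h8, h9]
  have hstep4 : 1/(2*a) - ε/2 ≤ (1 - r*h₀)/(2*a+η) := by
    rw [sub_div]
    have p1 : 1/(2*a) - 1/(2*a+η) ≤ ε/4 := by
      have hid : 1/(2*a) - 1/(2*a+η) = η/((2*a)*(2*a+η)) := by
        field_simp
        ring
      rw [hid, div_le_iff₀ (by positivity)]
      nlinarith only [hη2, mul_pos (mul_pos hε ha) hη, ha, hε, hη]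
    have p2 : (r*h₀)/(2*a+η) ≤ ε/4 := by
      rw [div_le_iff₀ he]
      nlinarith only [hrh, mul_pos hε ha, mul_pos hε hη]
    linarith only [p1, p2]
  constructor
  · linarith only [hrc, hstep1, hstep2, hε]
  · linarith only [hstep3, hstep4, mul_nonneg hr0.le hC0, hε]
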